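/- Define I(s) = (1/π) ∫_{-1}^{1} log(s² - x²) √(1 - x²) dx for s > 1. Then I(s) = s² - 1 - 2∫_1^s √(y² - 1) dy + 1/2 - log 2. -/

import Mathlib

open scoped Interval
open Real intervalIntegral MeasureTheory Filter Topology Set

lemma arcsin_frac_deriv {s : ℝ} (hs : 1 < s) {x : ℝ} (hx : x ∈ Ioo (-1:ℝ) 1) :
    HasDerivAt (fun x => Real.arcsin ((1-s*x)/(s-x)))
      (-(Real.sqrt (s^2-1)) / ((s-x) * Real.sqrt (1-x^2))) x := by
  obtain ⟨hx1, hx2⟩ := hx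
  have hsx : (0:ℝ) < s - x := by linarith
  have h1x : (0:ℝ) < 1 - x^2 := by nlinarith
  have hsq : (0:ℝ) < Real.sqrt (1-x^2) := Real.sqrt_pos.2 h1x
  have hsqsq : Real.sqrt (1-x^2)^2 = 1-x^2 := Real.sq_sqrt h1x.le
  have hc1 : (0:ℝ) < s^2-1 := by nlinarith
  have hcpos : (0:ℝ) < Real.sqrt (s^2-1) := Real.sqrt_pos.2 hc1
  have hc2 : Real.sqrt (s^2-1)^2 = s^2-1 := Real.sq_sqrt hc1.le
  set c := Real.sqrt (s^2-1) with hc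
  have hu : HasDerivAt (fun x => (1-s*x)/(s-x)) ((1-s^2)/(s-x)^2) x := by
    have h1 : HasDerivAt (fun x : ℝ => 1-s*x) (-s) x := by
      simpa using ((hasDerivAt_id x).const_mul s).const_sub 1
    have h2 : HasDerivAt (fun x : ℝ => s-x) (-1) x := by
      simpa using (hasDerivAt_id x).const_sub s
    have := h1.div h2 (ne_of_gt hsx)
    refine this.congr_deriv ?_
    field_simp
    ring
  have hb : (0:ℝ) < c * Real.sqrt (1-x^2) / (s-x) := by
    exact div_pos (mul_pos hcpos hsq) hsx
  have key : 1 - ((1-s*x)/(s-x))^2 = (c * Real.sqrt (1-x^2) / (s-x))^2 := by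
    have : (c * Real.sqrt (1-x^2) / (s-x))^2 = (s^2-1)*(1-x^2)/(s-x)^2 := by
      rw [div_pow, mul_pow, hc2, hsqsq]
    rw [this]
    field_simp
    ring
  have hulist : ((1-s*x)/(s-x))^2 < 1 := by nlinarith [sq_nonneg (c * Real.sqrt (1-x^2) / (s-x)), mul_pos (mul_pos hcpos hsq) (mul_pos hcpos hsq)]
  have habs : |(1-s*x)/(s-x)| < 1 := by
    rw [abs_lt]; constructor <;> nlinarith [hulist, sq_nonneg ((1-s*x)/(s-x) + 1), sq_nonneg ((1-s*x)/(s-x) - 1)]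
  have hu1 : (1-s*x)/(s-x) ≠ 1 := by intro h; rw [h] at habs; simp at habs
  have hu2 : (1-s*x)/(s-x) ≠ -1 := by intro h; rw [h] at habs; simp at habs
  have harc := (Real.hasDerivAt_arcsin hu2 hu1).comp x hu
  refine harc.congr_deriv ?_
  rw [key, Real.sqrt_sq hb.le]
  rw [show (1:ℝ)-s^2 = -c^2 by linarith]
  field_simp

lemma arcsin_frac_deriv' {s : ℝ} (hs : 1 < s) {x : ℝ} (hx : x ∈ Ioo (-1:ℝ) 1) :
    HasDerivAt (fun x => Real.arcsin ((1+s*x)/(s+x)))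
      (Real.sqrt (s^2-1) / ((s+x) * Real.sqrt (1-x^2))) x := by
  have hx' : -x ∈ Ioo (-1:ℝ) 1 := ⟨by linarith [hx.2], by linarith [hx.1]⟩
  have h := (arcsin_frac_deriv hs hx').comp x (hasDerivAt_neg x)
  have heq : (fun x : ℝ => Real.arcsin ((1-s*(-x))/(s-(-x)))) = (fun x => Real.arcsin ((1+s*x)/(s+x))) := by
    funext y; ring_nf
  convert h using 1
  · rfl
  · rfl
  · exact heq.symm ▸ rfl
  · rw [show s - -x = s + x by ring, show (1:ℝ) - (-x)^2 = 1 - x^2 by ring]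
    ring

noncomputable def Gfun (s : ℝ) (x : ℝ) : ℝ :=
  2*s*Real.arcsin x + Real.sqrt (s^2-1) *
    (Real.arcsin ((1-s*x)/(s-x)) - Real.arcsin ((1+s*x)/(s+x)))

lemma Gfun_deriv {s : ℝ} (hs : 1 < s) {x : ℝ} (hx : x ∈ Ioo (-1:ℝ) 1) :
    HasDerivAt (Gfun s) (2*s*Real.sqrt (1-x^2)/(s^2-x^2)) x := by
  obtain ⟨hx1, hx2⟩ := hx
  have hsx : (0:ℝ) < s - x := by linarith
  have hsx' : (0:ℝ) < s + x := by linarith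
  have h1x : (0:ℝ) < 1 - x^2 := by nlinarith
  have hsq : (0:ℝ) < Real.sqrt (1-x^2) := Real.sqrt_pos.2 h1x
  have hsqsq : Real.sqrt (1-x^2)^2 = 1-x^2 := Real.sq_sqrt h1x.le
  have hc1 : (0:ℝ) < s^2-1 := by nlinarith
  have hc2 : Real.sqrt (s^2-1)^2 = s^2-1 := Real.sq_sqrt hc1.le
  have hx1' : x ≠ -1 := by intro h; rw [h] at hx1; linarith
  have hx2' : x ≠ 1 := by intro h; rw [h] at hx2; linarith
  have ha : HasDerivAt (fun x : ℝ => 2*s*Real.arcsin x) (2*s*(1/Real.sqrt (1-x^2))) x :=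
    (Real.hasDerivAt_arcsin hx1' hx2').const_mul (2*s)
  have hb := ((arcsin_frac_deriv hs ⟨hx1,hx2⟩).sub (arcsin_frac_deriv' hs ⟨hx1,hx2⟩)).const_mul
      (Real.sqrt (s^2-1))
  have := ha.add hb
  refine this.congr_deriv ?_
  have hs2 : (0:ℝ) < s^2 - x^2 := by nlinarith
  have hc2' : Real.sqrt (-1+s^2)^2 = s^2-1 := by rw [show (-1+s^2) = s^2-1 by ring]; exact hc2
  field_simp
  linear_combination (2*s*(x^2-s^2)) * hsqsq + (2*s*(x^2-s^2)) * hc2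

lemma key_integral {s : ℝ} (hs : 1 < s) :
    ∫ x in (-1:ℝ)..1, 2*s*Real.sqrt (1-x^2)/(s^2-x^2) = 2*π*(s - Real.sqrt (s^2-1)) := by
  have hne1 : ∀ x ∈ Icc (-1:ℝ) 1, s - x ≠ 0 := fun x hx => by
    have := hx.2; intro h; nlinarith
  have hne2 : ∀ x ∈ Icc (-1:ℝ) 1, s + x ≠ 0 := fun x hx => by
    have := hx.1; intro h; nlinarith
  have hne3 : ∀ x ∈ Icc (-1:ℝ) 1, s^2 - x^2 ≠ 0 := fun x hx => by
    have h1 := hx.1; have h2 := hx.2; intro h; nlinarith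
  have hcont : ContinuousOn (Gfun s) (Icc (-1:ℝ) 1) := by
    unfold Gfun
    apply ContinuousOn.add
    · exact continuousOn_const.mul Real.continuous_arcsin.continuousOn
    · apply continuousOn_const.mul
      apply ContinuousOn.sub
      · exact Real.continuous_arcsin.comp_continuousOn
          (((continuous_const.sub (continuous_const.mul continuous_id)).continuousOn).div
            ((continuous_const.sub continuous_id).continuousOn) hne1)
      · exact Real.continuous_arcsin.comp_continuousOn
          (((continuous_const.add (continuous_const.mul continuous_id)).continuousOn).div
            ((continuous_const.add continuous_id).continuousOn) hne2)
  have hint : IntervalIntegrable (fun x => 2*s*Real.sqrt (1-x^2)/(s^2-x^2)) volume (-1) 1 := by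
    apply ContinuousOn.intervalIntegrable
    rw [uIcc_of_le (by norm_num : (-1:ℝ) ≤ 1)]
    exact ((continuous_const.mul (continuous_sqrt.comp (by continuity))).continuousOn).div
      ((continuous_const.sub (continuous_pow 2)).continuousOn) hne3
  have h := intervalIntegral.integral_eq_sub_of_hasDeriv_right_of_le (by norm_num : (-1:ℝ) ≤ 1)
    hcont (fun x hx => (Gfun_deriv hs hx).hasDerivWithinAt) hint
  rw [h]
  unfold Gfun
  have e1 : (1 - s*1)/(s-1) = -1 := by
    rw [show 1 - s*1 = -(s-1) by ring, neg_div, div_self (by intro h; nlinarith)]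
  have e2 : (1 + s*1)/(s+1) = 1 := by
    rw [show 1 + s*1 = s+1 by ring, div_self (by intro h; nlinarith)]
  have e3 : (1 - s*(-1))/(s-(-1)) = 1 := by
    rw [show 1 - s*(-1) = s+1 by ring, show s-(-1) = s+1 by ring, div_self (by intro h; nlinarith)]
  have e4 : (1 + s*(-1))/(s+(-1)) = -1 := by
    rw [show 1 + s*(-1) = -(s-1) by ring, show s + (-1) = s - 1 by ring, neg_div,
      div_self (by intro h; nlinarith)]
  rw [e1, e2, e3, e4, Real.arcsin_one, Real.arcsin_neg_one]
  ring

lemma sqrt_hasDeriv {y : ℝ} (hy : 1 < y) :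
    HasDerivAt (fun y : ℝ => Real.sqrt (y^2-1)) (y / Real.sqrt (y^2-1)) y := by
  have h1 : (0:ℝ) < y^2 - 1 := by nlinarith
  have : HasDerivAt (fun y : ℝ => y^2-1) (2*y) y := by
    simpa using ((hasDerivAt_pow 2 y).sub_const 1)
  have := this.sqrt (ne_of_gt h1)
  refine this.congr_deriv ?_
  field_simp

lemma arcosh_hasDeriv {y : ℝ} (hy : 1 < y) :
    HasDerivAt (fun y : ℝ => (y * Real.sqrt (y^2-1) - Real.log (y + Real.sqrt (y^2-1)))/2)
      (Real.sqrt (y^2-1)) y := by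
  have h1 : (0:ℝ) < y^2 - 1 := by nlinarith
  have hs : Real.sqrt (y^2-1) > 0 := Real.sqrt_pos.2 h1
  have hsq : Real.sqrt (y^2-1) ^ 2 = y^2 - 1 := Real.sq_sqrt h1.le
  have hd := sqrt_hasDeriv hy
  have hpos : y + Real.sqrt (y^2-1) > 0 := by positivity
  have h2 : HasDerivAt (fun y : ℝ => y * Real.sqrt (y^2-1)) 
      (Real.sqrt (y^2-1) + y * (y / Real.sqrt (y^2-1))) y := by simpa [Pi.mul_def] using (hasDerivAt_id y).mul hd
  have h3 : HasDerivAt (fun y : ℝ => Real.log (y + Real.sqrt (y^2-1)))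
      ((1 + y / Real.sqrt (y^2-1)) / (y + Real.sqrt (y^2-1))) y := by
    exact (((hasDerivAt_id y).add hd).log (ne_of_gt hpos))
  have := (h2.sub h3).div_const 2
  refine this.congr_deriv ?_
  field_simp
  linear_combination (-(y + Real.sqrt (y^2-1))) * hsq

lemma arcosh_integral {t : ℝ} (ht : 1 ≤ t) :
    ∫ y in (1:ℝ)..t, Real.sqrt (y^2-1)
      = (t * Real.sqrt (t^2-1) - Real.log (t + Real.sqrt (t^2-1)))/2 := by
  have hcont : ContinuousOn (fun y : ℝ => (y * Real.sqrt (y^2-1) - Real.log (y + Real.sqrt (y^2-1)))/2) (Icc 1 t) := by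
    apply ContinuousOn.div_const
    apply ContinuousOn.sub
    · exact (continuousOn_id.mul ((continuous_sqrt.comp (by continuity)).continuousOn))
    · apply ContinuousOn.log
      · exact (continuousOn_id.add ((continuous_sqrt.comp (by continuity)).continuousOn))
      · intro y hy
        have : (0:ℝ) ≤ Real.sqrt (y^2-1) := Real.sqrt_nonneg _
        have := hy.1
        nlinarith
  have := intervalIntegral.integral_eq_sub_of_hasDeriv_right_of_le ht hcont
    (fun y hy => (arcosh_hasDeriv hy.1).hasDerivWithinAt)
    (by
      apply ContinuousOn.intervalIntegrable
      rw [uIcc_of_le ht]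
      exact (continuous_sqrt.comp (by continuity)).continuousOn)
  rw [this]
  norm_num

noncomputable def Phi (r : ℝ) : ℝ := ∫ x in (-1:ℝ)..1, Real.log (r^2 - x^2) * Real.sqrt (1 - x^2)

lemma Phi_integrand_cont {r : ℝ} (hr : 1 < r) :
    ContinuousOn (fun x : ℝ => Real.log (r^2 - x^2) * Real.sqrt (1 - x^2)) (Icc (-1:ℝ) 1) := by
  apply ContinuousOn.mul
  · apply ContinuousOn.log
    · exact (continuous_const.sub (continuous_pow 2)).continuousOn
    · intro x hx
      have h1 := hx.1; have h2 := hx.2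
      intro h; nlinarith
  · exact (continuous_sqrt.comp (by continuity)).continuousOn

lemma Phi_hasDeriv {s : ℝ} (hs : 1 < s) :
    HasDerivAt Phi (∫ x in (-1:ℝ)..1, 2*s/(s^2-x^2) * Real.sqrt (1-x^2)) s := by
  set ε := (s-1)/2 with hε
  have hε_pos : 0 < ε := by rw [hε]; linarith
  have hsε : s - ε = (s+1)/2 := by rw [hε]; ring
  have hden : (0:ℝ) < (s-ε)^2 - 1 := by rw [hsε]; nlinarith
  have hball : ∀ r ∈ Metric.ball s ε, 1 < r ∧ s - ε < r ∧ r < s + ε := by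
    intro r hr
    rw [Metric.mem_ball, Real.dist_eq, abs_lt] at hr
    refine ⟨by linarith [hr.1], by rw [hε]; linarith [hr.1], by rw [hε]; linarith [hr.2]⟩
  have key : ∀ r ∈ Metric.ball s ε, ∀ x ∈ Ι (-1:ℝ) 1, (0:ℝ) < r^2 - x^2 ∧ (s-ε)^2 - 1 ≤ r^2 - x^2 := by
    intro r hr x hx
    obtain ⟨h1, h2, h3⟩ := hball r hr
    rw [uIoc_of_le (by norm_num : (-1:ℝ) ≤ 1)] at hx
    obtain ⟨hx1, hx2⟩ := hx
    constructor
    · nlinarith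
    · nlinarith [hsε]
  have main := intervalIntegral.hasDerivAt_integral_of_dominated_loc_of_deriv_le
    (F := fun r x => Real.log (r^2 - x^2) * Real.sqrt (1 - x^2))
    (F' := fun r x => 2*r/(r^2-x^2) * Real.sqrt (1-x^2))
    (x₀ := s) (a := (-1:ℝ)) (b := 1) (μ := volume)
    (bound := fun _ => 2*(s+ε)/((s-ε)^2-1)) (Metric.ball_mem_nhds s hε_pos)
    (Eventually.of_forall fun r => (((Real.measurable_log.comp
        ((measurable_id.pow_const 2).const_sub (r^2))).mul
        (Real.continuous_sqrt.measurable.comp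
          ((measurable_id.pow_const 2).const_sub 1))).aestronglyMeasurable))
    (by
      apply ContinuousOn.intervalIntegrable
      rw [uIcc_of_le (by norm_num : (-1:ℝ) ≤ 1)]
      exact Phi_integrand_cont hs)
    (((measurable_const.div ((measurable_id.pow_const 2).const_sub (s^2))).mul
        (Real.continuous_sqrt.measurable.comp
          ((measurable_id.pow_const 2).const_sub 1))).aestronglyMeasurable)
    (Eventually.of_forall fun x => by
      intro hx r hr
      obtain ⟨hpos, hge⟩ := key r hr x hx
      obtain ⟨h1, h2, h3⟩ := hball r hr
      have hsq_le : Real.sqrt (1-x^2) ≤ 1 := by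
        exact Real.sqrt_le_one.2 (by nlinarith [sq_nonneg x])
      have hsq_nonneg : (0:ℝ) ≤ Real.sqrt (1-x^2) := Real.sqrt_nonneg _
      rw [Real.norm_eq_abs, abs_of_nonneg (by positivity)]
      calc 2*r/(r^2-x^2) * Real.sqrt (1-x^2) ≤ 2*r/(r^2-x^2) * 1 := by
            apply mul_le_mul_of_nonneg_left hsq_le (by positivity)
        _ = 2*r/(r^2-x^2) := by ring
        _ ≤ 2*(s+ε)/((s-ε)^2-1) := by
            apply div_le_div₀ (by positivity) (by linarith) hden hge)
    (by
      apply ContinuousOn.intervalIntegrable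
      exact continuousOn_const)
    (Eventually.of_forall fun x => by
      intro hx r hr
      obtain ⟨hpos, _⟩ := key r hr x hx
      have hlog : HasDerivAt (fun r : ℝ => Real.log (r^2 - x^2)) (2*r/(r^2-x^2)) r := by
        have hp : HasDerivAt (fun r : ℝ => r^2 - x^2) (2*r) r := by
          simpa using (hasDerivAt_pow 2 r).sub_const (x^2)
        exact hp.log (ne_of_gt hpos)
      exact hlog.mul_const _)
  exact main.2


noncomputable def Efun (t : ℝ) : ℝ := ∫ x in (-1:ℝ)..1, Real.log (1 - x^2/t^2) * Real.sqrt (1-x^2)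

lemma Phi_split {t : ℝ} (ht : 1 < t) : Phi t = π * Real.log t + Efun t := by
  have ht0 : (0:ℝ) < t := by linarith
  have hden : ∀ x ∈ Icc (-1:ℝ) 1, (0:ℝ) < 1 - x^2/t^2 := by
    intro x hx
    have h1 := hx.1; have h2 := hx.2
    have hx2 : x^2 ≤ 1 := by nlinarith
    have : x^2/t^2 < 1 := by
      rw [div_lt_one (by positivity)]; nlinarith
    linarith
  have h1 : ∀ x ∈ uIcc (-1:ℝ) 1, Real.log (t^2-x^2) * Real.sqrt (1-x^2)
      = Real.log (t^2) * Real.sqrt (1-x^2) + Real.log (1 - x^2/t^2) * Real.sqrt (1-x^2) := by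
    intro x hx
    rw [uIcc_of_le (by norm_num : (-1:ℝ) ≤ 1)] at hx
    have h2 : t^2 - x^2 = t^2 * (1 - x^2/t^2) := by field_simp
    rw [h2, Real.log_mul (by positivity) (ne_of_gt (hden x hx)), add_mul]
  have hcont2 : ContinuousOn (fun x : ℝ => Real.log (1 - x^2/t^2) * Real.sqrt (1-x^2)) (Icc (-1:ℝ) 1) := by
    apply ContinuousOn.mul
    · exact ContinuousOn.log (by fun_prop) (fun x hx => ne_of_gt (hden x hx))
    · exact (continuous_sqrt.comp (by continuity)).continuousOn
  have hint1 : IntervalIntegrable (fun x : ℝ => Real.log (t^2) * Real.sqrt (1-x^2)) volume (-1) 1 := by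
    apply ContinuousOn.intervalIntegrable
    exact (continuous_const.mul (continuous_sqrt.comp (by continuity))).continuousOn
  have hint2 : IntervalIntegrable (fun x : ℝ => Real.log (1 - x^2/t^2) * Real.sqrt (1-x^2)) volume (-1) 1 := by
    apply ContinuousOn.intervalIntegrable
    rw [uIcc_of_le (by norm_num : (-1:ℝ) ≤ 1)]
    exact hcont2
  unfold Phi Efun
  rw [intervalIntegral.integral_congr h1, intervalIntegral.integral_add hint1 hint2,
    intervalIntegral.integral_const_mul, integral_sqrt_one_sub_sq, Real.log_pow]
  push_cast
  ring

lemma Efun_tendsto : Tendsto Efun atTop (𝓝 0) := by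
  have hbound : ∀ᶠ t in atTop, ‖Efun t‖ ≤ 2 * (-Real.log (1 - 1/t^2)) := by
    filter_upwards [eventually_gt_atTop (1:ℝ)] with t ht
    have ht0 : (0:ℝ) < t := by linarith
    have h1t : (0:ℝ) < 1 - 1/t^2 := by
      have : 1/t^2 < 1 := by rw [div_lt_one (by positivity)]; nlinarith
      linarith
    have key : ∀ x ∈ Ι (-1:ℝ) 1, ‖Real.log (1 - x^2/t^2) * Real.sqrt (1-x^2)‖ ≤ -Real.log (1 - 1/t^2) := by
      intro x hx
      rw [uIoc_of_le (by norm_num : (-1:ℝ) ≤ 1)] at hx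
      have hx1 := hx.1; have hx2 := hx.2
      have hx2' : x^2 ≤ 1 := by nlinarith
      have hle : 1 - 1/t^2 ≤ 1 - x^2/t^2 := by
        have : x^2/t^2 ≤ 1/t^2 := by apply div_le_div_of_nonneg_right ?_ (by positivity); exact hx2'
        linarith
      have hdiv_nonneg : (0:ℝ) ≤ x^2/t^2 := by positivity
      have harg : (0:ℝ) < 1 - x^2/t^2 := lt_of_lt_of_le h1t hle
      have hlog_le : Real.log (1-1/t^2) ≤ Real.log (1-x^2/t^2) := Real.log_le_log h1t hle
      have hlog_np : Real.log (1-x^2/t^2) ≤ 0 := Real.log_nonpos (by linarith) (by linarith)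
      have habs : |Real.log (1-x^2/t^2)| = -Real.log (1-x^2/t^2) := abs_of_nonpos hlog_np
      rw [norm_mul, Real.norm_eq_abs, Real.norm_eq_abs, habs]
      have hsq : |Real.sqrt (1-x^2)| ≤ 1 := by
        rw [abs_of_nonneg (Real.sqrt_nonneg _)]
        exact Real.sqrt_le_one.2 (by nlinarith [sq_nonneg x])
      calc -Real.log (1-x^2/t^2) * |Real.sqrt (1-x^2)| ≤ -Real.log (1-x^2/t^2) * 1 :=
            mul_le_mul_of_nonneg_left hsq (by linarith)
        _ = -Real.log (1-x^2/t^2) := by ring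
        _ ≤ -Real.log (1-1/t^2) := by linarith
    have := intervalIntegral.norm_integral_le_of_norm_le_const key
    calc ‖Efun t‖ ≤ (-Real.log (1 - 1/t^2)) * |1 - (-1:ℝ)| := this
      _ = 2 * (-Real.log (1 - 1/t^2)) := by norm_num; ring
  apply squeeze_zero_norm' hbound
  have h1 : Tendsto (fun t : ℝ => 1 - 1/t^2) atTop (𝓝 1) := by
    have : Tendsto (fun t : ℝ => 1/t^2) atTop (𝓝 0) := by
      simp only [one_div]
      exact Tendsto.comp tendsto_inv_atTop_zero (tendsto_pow_atTop (by norm_num))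
    simpa using (tendsto_const_nhds (x := (1:ℝ))).sub this
  have h2 : Tendsto (fun t : ℝ => Real.log (1 - 1/t^2)) atTop (𝓝 0) := by
    have := (Real.continuousAt_log (by norm_num : (1:ℝ) ≠ 0)).tendsto.comp h1
    simpa [Function.comp_def] using this
  have := h2.neg.const_mul 2
  simpa using this

lemma Phi_deriv_val {s : ℝ} (hs : 1 < s) :
    HasDerivAt Phi (2*π*(s - Real.sqrt (s^2-1))) s := by
  have h := Phi_hasDeriv hs
  have e : (∫ x in (-1:ℝ)..1, 2*s/(s^2-x^2) * Real.sqrt (1-x^2))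
      = ∫ x in (-1:ℝ)..1, 2*s*Real.sqrt (1-x^2)/(s^2-x^2) :=
    intervalIntegral.integral_congr (fun x _ => by ring)
  rw [e, key_integral hs] at h
  exact h

noncomputable def Dfun (r : ℝ) : ℝ :=
  Phi r - π*(r^2 - 1 - (r*Real.sqrt (r^2-1) - Real.log (r + Real.sqrt (r^2-1))) + 1/2 - Real.log 2)

lemma Dfun_deriv {r : ℝ} (hr : 1 < r) : HasDerivAt Dfun 0 r := by
  have h1 := Phi_deriv_val hr
  have h2 : HasDerivAt (fun y : ℝ => y*Real.sqrt (y^2-1) - Real.log (y + Real.sqrt (y^2-1)))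
      (2*Real.sqrt (r^2-1)) r := by
    have h := (arcosh_hasDeriv hr).const_mul 2
    have heq : (fun y : ℝ => y*Real.sqrt (y^2-1) - Real.log (y + Real.sqrt (y^2-1)))
        = fun y => 2*((y*Real.sqrt (y^2-1) - Real.log (y + Real.sqrt (y^2-1)))/2) := by
      funext y; ring
    rw [heq]
    exact h
  have hg : HasDerivAt (fun y : ℝ => y^2 - 1 - (y*Real.sqrt (y^2-1) - Real.log (y + Real.sqrt (y^2-1))) + 1/2 - Real.log 2)
      (2*r - 2*Real.sqrt (r^2-1)) r := by
    have hp : HasDerivAt (fun y : ℝ => y^2 - 1) (2*r) r := by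
      simpa using (hasDerivAt_pow 2 r).sub_const 1
    simpa using ((hp.sub h2).add_const (1/2)).sub_const (Real.log 2)
  have := h1.sub (hg.const_mul π)
  refine this.congr_deriv ?_
  ring

lemma Dfun_const {s t : ℝ} (hs : 1 < s) (hst : s ≤ t) : Dfun t = Dfun s := by
  have h := intervalIntegral.integral_eq_sub_of_hasDerivAt (f := Dfun) (f' := fun _ => (0:ℝ))
    (fun x hx => by
      rw [uIcc_of_le hst] at hx
      exact Dfun_deriv (lt_of_lt_of_le hs hx.1))
    (intervalIntegrable_const)
  simp only [intervalIntegral.integral_const, smul_zero] at h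
  linarith [h]

lemma gfun_tendsto : Tendsto (fun t : ℝ => t/(t+Real.sqrt (t^2-1))) atTop (𝓝 (1/2)) := by
  have h1 : Tendsto (fun t : ℝ => 1 - 1/t^2) atTop (𝓝 1) := by
    have : Tendsto (fun t : ℝ => 1/t^2) atTop (𝓝 0) := by
      simp only [one_div]
      exact Tendsto.comp tendsto_inv_atTop_zero (tendsto_pow_atTop (by norm_num))
    simpa using (tendsto_const_nhds (x := (1:ℝ))).sub this
  have h2 : Tendsto (fun t : ℝ => 1 + Real.sqrt (1 - 1/t^2)) atTop (𝓝 2) := by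
    have := (Real.continuous_sqrt.tendsto 1).comp h1
    rw [Real.sqrt_one] at this
    have := (tendsto_const_nhds (x := (1:ℝ))).add this
    norm_num at this ⊢
    exact this
  have h3 : Tendsto (fun t : ℝ => 1/(1 + Real.sqrt (1 - 1/t^2))) atTop (𝓝 (1/2)) :=
    tendsto_const_nhds.div h2 (by norm_num)
  refine h3.congr' ?_
  filter_upwards [eventually_gt_atTop (1:ℝ)] with t ht
  have ht0 : (0:ℝ) < t := by linarith
  have hfac : t^2 - 1 = t^2 * (1 - 1/t^2) := by field_simp
  have hsq : Real.sqrt (t^2-1) = t * Real.sqrt (1 - 1/t^2) := by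
    rw [hfac, Real.sqrt_mul (by positivity), Real.sqrt_sq ht0.le]
  rw [hsq]
  rw [show t + t * Real.sqrt (1 - 1/t^2) = t * (1 + Real.sqrt (1 - 1/t^2)) by ring]
  have hpos : (0:ℝ) < 1 + Real.sqrt (1 - 1/t^2) := by positivity
  field_simp

lemma Bfun_tendsto : Tendsto (fun t : ℝ => Real.log t - (t^2-1) + t*Real.sqrt (t^2-1)
    - Real.log (t + Real.sqrt (t^2-1)) - 1/2 + Real.log 2) atTop (𝓝 0) := by
  have hg := gfun_tendsto
  have hlog : Tendsto (fun t : ℝ => Real.log (t/(t+Real.sqrt (t^2-1)))) atTop (𝓝 (Real.log (1/2))) :=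
    ((Real.continuousAt_log (by norm_num : (1/2:ℝ) ≠ 0)).tendsto).comp hg
  have hcomb : Tendsto (fun t : ℝ => (1 - t/(t+Real.sqrt (t^2-1))) - 1/2 + Real.log 2
      + Real.log (t/(t+Real.sqrt (t^2-1)))) atTop
      (𝓝 ((1 - 1/2) - 1/2 + Real.log 2 + Real.log (1/2))) := by
    exact ((((tendsto_const_nhds (x := (1:ℝ))).sub hg).sub_const (1/2)).add_const (Real.log 2)).add hlog
  have hval : (1 - 1/2 : ℝ) - 1/2 + Real.log 2 + Real.log (1/2) = 0 := by
    rw [show (1/2 : ℝ) = 2⁻¹ by norm_num, Real.log_inv]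
    ring
  rw [hval] at hcomb
  refine hcomb.congr' ?_
  filter_upwards [eventually_gt_atTop (1:ℝ)] with t ht
  have ht0 : (0:ℝ) < t := by linarith
  have hc1 : (0:ℝ) < t^2 - 1 := by nlinarith
  have hc2 : Real.sqrt (t^2-1)^2 = t^2-1 := Real.sq_sqrt hc1.le
  have hcpos : (0:ℝ) < Real.sqrt (t^2-1) := Real.sqrt_pos.2 hc1
  have hd : (0:ℝ) < t + Real.sqrt (t^2-1) := by positivity
  have hglog : Real.log (t/(t+Real.sqrt (t^2-1))) = Real.log t - Real.log (t+Real.sqrt (t^2-1)) :=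
    Real.log_div (ne_of_gt ht0) (ne_of_gt hd)
  have hgval : t/(t+Real.sqrt (t^2-1)) = t^2 - t*Real.sqrt (t^2-1) := by
    rw [div_eq_iff (ne_of_gt hd)]
    linear_combination t * hc2
  rw [hglog, hgval]
  ring

lemma Dfun_tendsto : Tendsto Dfun atTop (𝓝 0) := by
  have h := Efun_tendsto.add (Bfun_tendsto.const_mul π)
  simp only [mul_zero, add_zero] at h
  refine h.congr' ?_
  filter_upwards [eventually_gt_atTop (1:ℝ)] with t ht
  rw [Dfun, Phi_split ht]
  ring

lemma Dfun_eq_zero {s : ℝ} (hs : 1 < s) : Dfun s = 0 := by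
  have h1 : Tendsto Dfun atTop (𝓝 (Dfun s)) := by
    refine tendsto_const_nhds.congr' ?_
    filter_upwards [eventually_ge_atTop s] with t ht
    exact (Dfun_const hs ht).symm
  exact tendsto_nhds_unique h1 Dfun_tendsto

theorem stmt8 (s : ℝ) (hs : 1 < s) :
    (1 / π) * ∫ x in (-1 : ℝ)..1, Real.log (s ^ 2 - x ^ 2) * Real.sqrt (1 - x ^ 2)
      = s ^ 2 - 1 - 2 * (∫ y in (1 : ℝ)..s, Real.sqrt (y ^ 2 - 1)) + 1 / 2 - Real.log 2 := by
  have hD := Dfun_eq_zero hs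
  rw [Dfun, sub_eq_zero] at hD
  have hint := arcosh_integral hs.le
  have hPhi : (∫ x in (-1 : ℝ)..1, Real.log (s ^ 2 - x ^ 2) * Real.sqrt (1 - x ^ 2)) = Phi s := rfl
  rw [hPhi, hD, hint]
  have hπ : π ≠ 0 := Real.pi_ne_zero
  field_simp
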